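/- Weighted sums of differences of squared moduli of characteristic functions (Lemma 6, in the general form its proof establishes): Let (X_n)_{n≥1} be real-valued random variables on a probability space, ℓ ∈ ℝ and σ > 0 such that (X_n − nℓ)/(σ√n) converges in distribution to the standard normal N(0,1), and let b : ℕ → [0,∞) be summable, ∑_{k=0}^∞ b_k < ∞. Then for every t ∈ ℝ, lim_{n→∞} ∑_{k=0}^{n−1} b_k · | |E[e^{i (t/(σ√n)) X_{n−k}}]|² − |E[e^{i (t/(σ√n)) X_n}]|² | = 0. (The paper applies this with X_n = |Y_n| and b_k = P̂(τ = k)·(θ/ρ²)^k.) -/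

import Mathlib

open MeasureTheory ProbabilityTheory Filter
open scoped Topology ENNReal

/-- The distribution function `Φ` of the standard normal distribution. -/
noncomputable def stdGaussCDF (x : ℝ) : ℝ := (ProbabilityTheory.gaussianReal 0 1 (Set.Iic x)).toReal

section AuxLemmas
open Set

lemma prob_Ioi_toReal {ν : Measure ℝ} [IsProbabilityMeasure ν] (a : ℝ) :
    (ν (Set.Ioi a)).toReal = 1 - (ν (Set.Iic a)).toReal := by
  have h : ν (Set.Ioi a) = ν Set.univ - ν (Set.Iic a) := by
    rw [← Set.compl_Iic]; exact measure_compl measurableSet_Iic (measure_ne_top ν _)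
  rw [h, measure_univ, ENNReal.toReal_sub_of_le prob_le_one (by simp)]
  simp

lemma prob_Ioc_toReal {ν : Measure ℝ} [IsProbabilityMeasure ν] {a b : ℝ} (hab : a ≤ b) :
    (ν (Set.Ioc a b)).toReal = (ν (Set.Iic b)).toReal - (ν (Set.Iic a)).toReal := by
  have : Set.Ioc a b = Set.Iic b \ Set.Iic a := by
    ext x; simp [Set.mem_Ioc, Set.mem_diff, and_comm]
  rw [this, measure_diff (Set.Iic_subset_Iic.2 hab) measurableSet_Iic.nullMeasurableSet
    (measure_ne_top ν _), ENNReal.toReal_sub_of_le (measure_mono (Set.Iic_subset_Iic.2 hab))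
    (measure_ne_top ν _)]

lemma integrable_of_bdd {ν : Measure ℝ} [IsProbabilityMeasure ν] {h : ℝ → ℂ}
    (hm : Measurable h) (h1 : ∀ x, ‖h x‖ ≤ 1) : Integrable h ν := by
  exact (integrable_const (1:ℝ)).mono' hm.aestronglyMeasurable (Filter.Eventually.of_forall h1)

lemma chunk {ν : Measure ℝ} [IsProbabilityMeasure ν] {h : ℝ → ℂ} (hm : Measurable h)
    (h1 : ∀ x, ‖h x‖ ≤ 1) {L : ℝ} (hL0 : 0 ≤ L)
    (hL : ∀ x y, ‖h x - h y‖ ≤ L * |x - y|)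
    {a δ ε : ℝ} (hδ : 0 ≤ δ) (hε : 0 ≤ ε) (hLδ : L * δ ≤ ε) (m : ℕ) :
    ‖(∫ x, h x ∂ν) - ∑ j ∈ Finset.range m,
        ((ν (Set.Iic (a + (j+1)*δ))).toReal - (ν (Set.Iic (a + j*δ))).toReal) • h (a + (j+1)*δ)‖
      ≤ (ν (Set.Iic a)).toReal + (ν (Set.Ioi (a + m*δ))).toReal + ε := by
  set x : ℕ → ℝ := fun j => a + j * δ with hx
  have hxmono : ∀ j : ℕ, x j ≤ x (j+1) := by
    intro j
    simp only [hx]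
    push_cast
    nlinarith [hδ]
  have hi : Integrable h ν := integrable_of_bdd hm h1
  have hsplit : ∀ J : ℕ, ∫ y in Set.Iic (x J), h y ∂ν =
      (∫ y in Set.Iic (x 0), h y ∂ν) +
        ∑ j ∈ Finset.range J, ∫ y in Set.Ioc (x j) (x (j+1)), h y ∂ν := by
    intro J
    induction J with
    | zero => simp
    | succ J ih =>
      have hdisj : Disjoint (Set.Iic (x J)) (Set.Ioc (x J) (x (J+1))) := Set.Iic_disjoint_Ioc le_rfl
      have hun : Set.Iic (x J) ∪ Set.Ioc (x J) (x (J+1)) = Set.Iic (x (J+1)) :=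
        Set.Iic_union_Ioc_eq_Iic (hxmono J)
      rw [Finset.sum_range_succ, ← add_assoc, ← ih, ← setIntegral_union hdisj measurableSet_Ioc
        hi.integrableOn hi.integrableOn, hun]
  have htot : (∫ x, h x ∂ν) = (∫ y in Set.Iic (x m), h y ∂ν) + ∫ y in Set.Ioi (x m), h y ∂ν := by
    rw [← setIntegral_union (Set.Iic_disjoint_Ioi le_rfl) measurableSet_Ioi hi.integrableOn
      hi.integrableOn, Set.Iic_union_Ioi, setIntegral_univ]
  set G : ℕ → ℝ := fun j => (ν (Set.Iic (x j))).toReal with hG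
  have hSrw : (∑ j ∈ Finset.range m,
        ((ν (Set.Iic (a + (j+1)*δ))).toReal - (ν (Set.Iic (a + j*δ))).toReal) • h (a + (j+1)*δ))
      = ∑ j ∈ Finset.range m, (G (j+1) - G j) • h (x (j+1)) := by
    refine Finset.sum_congr rfl fun j _ => ?_
    have h1 : a + ((j:ℝ)+1)*δ = x (j+1) := by simp only [hx]; push_cast; ring
    have h2 : a + (j:ℝ)*δ = x j := by simp [hx]
    rw [h1, h2]
  rw [hSrw]
  have key : (∫ x, h x ∂ν) - ∑ j ∈ Finset.range m, (G (j+1) - G j) • h (x (j+1))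
      = (∫ y in Set.Iic (x 0), h y ∂ν)
        + (∑ j ∈ Finset.range m,
            ((∫ y in Set.Ioc (x j) (x (j+1)), h y ∂ν) - (G (j+1) - G j) • h (x (j+1))))
        + ∫ y in Set.Ioi (x m), h y ∂ν := by
    rw [Finset.sum_sub_distrib]
    rw [htot, hsplit m]
    ring
  rw [key]
  have hb1 : ‖∫ y in Set.Iic (x 0), h y ∂ν‖ ≤ (ν (Set.Iic a)).toReal := by
    have := norm_setIntegral_le_of_norm_le_const (μ := ν) (s := Set.Iic (x 0)) (f := h)
      (measure_lt_top ν _) (fun y _ => h1 y)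
    simpa [hx, measureReal_def] using this
  have hb3 : ‖∫ y in Set.Ioi (x m), h y ∂ν‖ ≤ (ν (Set.Ioi (x m))).toReal := by
    have := norm_setIntegral_le_of_norm_le_const (μ := ν) (s := Set.Ioi (x m)) (f := h)
      (measure_lt_top ν _) (fun y _ => h1 y)
    simpa [measureReal_def] using this
  have hGioc : ∀ j : ℕ, (ν (Set.Ioc (x j) (x (j+1)))).toReal = G (j+1) - G j := by
    intro j; exact prob_Ioc_toReal (hxmono j)
  have hb2 : ∀ j ∈ Finset.range m,
      ‖(∫ y in Set.Ioc (x j) (x (j+1)), h y ∂ν) - (G (j+1) - G j) • h (x (j+1))‖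
        ≤ (L * δ) * (G (j+1) - G j) := by
    intro j _
    rw [← hGioc j, ← measureReal_def, ← setIntegral_const (c := h (x (j+1))) (μ := ν) (s := Set.Ioc (x j) (x (j+1))),
      ← integral_sub (hi.integrableOn) integrableOn_const]
    refine norm_setIntegral_le_of_norm_le_const (measure_lt_top ν _) (fun y hy => ?_)
    refine (hL y (x (j+1))).trans ?_
    have hxd : x (j+1) - x j = δ := by simp only [hx]; push_cast; ring
    have habs : |y - x (j+1)| ≤ δ := by
      rw [abs_le]
      constructor
      · nlinarith [hy.1, hy.2]
      · nlinarith [hy.1, hy.2, hδ]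
    nlinarith [habs, hL0, abs_nonneg (y - x (j+1))]
  have hx0m : ∀ j : ℕ, x 0 ≤ x j := by
    intro j
    induction j with
    | zero => exact le_rfl
    | succ j ih => exact le_trans ih (hxmono j)
  have hsum2 : ‖∑ j ∈ Finset.range m,
      ((∫ y in Set.Ioc (x j) (x (j+1)), h y ∂ν) - (G (j+1) - G j) • h (x (j+1)))‖ ≤ ε := by
    refine (norm_sum_le_of_le _ hb2).trans ?_
    rw [← Finset.mul_sum, Finset.sum_range_sub]
    have hGm : G m ≤ 1 := by
      have h01 : ν (Set.Iic (x m)) ≤ 1 := prob_le_one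
      have := ENNReal.toReal_mono ENNReal.one_ne_top h01
      simpa using this
    have hG00 : (0:ℝ) ≤ G 0 := ENNReal.toReal_nonneg
    have hGmono : G 0 ≤ G m :=
      ENNReal.toReal_mono (measure_ne_top ν _)
        (measure_mono (Set.Iic_subset_Iic.2 (hx0m m)))
    nlinarith [mul_nonneg hL0 hδ, hG00, hGmono]
  have hxm : (ν (Set.Ioi (a + (m:ℝ)*δ))).toReal = (ν (Set.Ioi (x m))).toReal := rfl
  rw [hxm]
  refine le_trans (norm_add_le _ _) ?_
  have h12 := le_trans (norm_add_le _ _) (add_le_add hb1 hsum2)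
  linarith [hb3, h12]

lemma helly_bray {ν : ℕ → Measure ℝ} [∀ n, IsProbabilityMeasure (ν n)] {γ : Measure ℝ}
    [IsProbabilityMeasure γ]
    (hF : ∀ x : ℝ, Tendsto (fun n => ((ν n) (Set.Iic x)).toReal) atTop
      (𝓝 ((γ (Set.Iic x)).toReal)))
    {f : ℕ → ℝ → ℂ} {g : ℝ → ℂ} {L : ℝ} (hL0 : 0 ≤ L)
    (hfm : ∀ n, Measurable (f n)) (hgm : Measurable g)
    (hf1 : ∀ n x, ‖f n x‖ ≤ 1) (hg1 : ∀ x, ‖g x‖ ≤ 1)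
    (hfL : ∀ n x y, ‖f n x - f n y‖ ≤ L * |x - y|)
    (hgL : ∀ x y, ‖g x - g y‖ ≤ L * |x - y|)
    (hfg : ∀ x, Tendsto (fun n => f n x) atTop (𝓝 (g x))) :
    Tendsto (fun n => ∫ x, f n x ∂(ν n)) atTop (𝓝 (∫ x, g x ∂γ)) := by
  rw [Metric.tendsto_atTop]
  intro ε hε
  set ε' : ℝ := ε / 10 with hε'def
  have hε' : 0 < ε' := by positivity
  -- choose a with small left tail for γ
  obtain ⟨a, ha⟩ : ∃ a : ℝ, (γ (Set.Iic a)).toReal < ε' := by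
    have h0 : Tendsto (fun x => (γ (Set.Iic x)).toReal) atBot (𝓝 0) := by
      have := ProbabilityTheory.tendsto_cdf_atBot γ
      refine this.congr fun x => ?_
      exact (ProbabilityTheory.cdf_eq_real γ x)
    exact (h0.eventually_lt_const hε').exists
  -- choose b with small right tail for γ
  obtain ⟨b, hbb⟩ : ∃ b : ℝ, 1 - ε' < (γ (Set.Iic b)).toReal := by
    have h0 : Tendsto (fun x => (γ (Set.Iic x)).toReal) atTop (𝓝 1) := by
      have := ProbabilityTheory.tendsto_cdf_atTop γ
      refine this.congr fun x => ?_
      exact (ProbabilityTheory.cdf_eq_real γ x)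
    exact (h0.eventually_const_lt (by linarith)).exists
  set δ : ℝ := ε' / (L + 1) with hδdef
  have hδ : 0 < δ := by positivity
  have hLδ : L * δ ≤ ε' := by
    rw [hδdef]
    have h1 : L / (L+1) ≤ 1 := by
      rw [div_le_one (by linarith)]; linarith
    calc L * (ε' / (L+1)) = (L / (L+1)) * ε' := by ring
      _ ≤ 1 * ε' := by nlinarith
      _ = ε' := one_mul _
  set m : ℕ := ⌈(b - a) / δ⌉₊ with hmdef
  have hbm : b ≤ a + m * δ := by
    have := Nat.le_ceil ((b - a) / δ)
    rw [div_le_iff₀ hδ] at this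
    linarith
  set S : ℕ → ℂ := fun n => ∑ j ∈ Finset.range m,
      (((ν n) (Set.Iic (a + (j+1)*δ))).toReal - ((ν n) (Set.Iic (a + j*δ))).toReal) •
        f n (a + (j+1)*δ) with hSdef
  set Sγ : ℂ := ∑ j ∈ Finset.range m,
      ((γ (Set.Iic (a + (j+1)*δ))).toReal - (γ (Set.Iic (a + j*δ))).toReal) •
        g (a + (j+1)*δ) with hSγdef
  have hcv : Tendsto S atTop (𝓝 Sγ) := by
    rw [hSdef, hSγdef]
    refine tendsto_finset_sum _ fun j _ => ?_
    exact ((hF _).sub (hF _)).smul (hfg _)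
  -- chunk bounds
  have hch : ∀ n, ‖(∫ x, f n x ∂(ν n)) - S n‖
      ≤ ((ν n) (Set.Iic a)).toReal + ((ν n) (Set.Ioi (a + m*δ))).toReal + ε' :=
    fun n => chunk (hfm n) (hf1 n) hL0 (hfL n) hδ.le hε'.le hLδ m
  have hchγ : ‖(∫ x, g x ∂γ) - Sγ‖
      ≤ (γ (Set.Iic a)).toReal + (γ (Set.Ioi (a + m*δ))).toReal + ε' :=
    chunk hgm hg1 hL0 hgL hδ.le hε'.le hLδ m
  have hγtail : (γ (Set.Ioi (a + m*δ))).toReal < ε' := by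
    rw [prob_Ioi_toReal]
    have hmono : (γ (Set.Iic b)).toReal ≤ (γ (Set.Iic (a + m*δ))).toReal :=
      ENNReal.toReal_mono (measure_ne_top γ _) (measure_mono (Set.Iic_subset_Iic.2 hbm))
    linarith
  have hchγ' : ‖(∫ x, g x ∂γ) - Sγ‖ ≤ 3 * ε' := by
    have := hchγ; linarith [hγtail, ha]
  -- eventual bounds for ν n
  have hev1 : ∀ᶠ n in atTop, ((ν n) (Set.Iic a)).toReal < 2 * ε' :=
    (hF a).eventually_lt_const (by linarith [ha])
  have hev2 : ∀ᶠ n in atTop, ((ν n) (Set.Ioi (a + m*δ))).toReal < 2 * ε' := by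
    have h1 : Tendsto (fun n => ((ν n) (Set.Ioi (a + m*δ))).toReal) atTop
        (𝓝 ((γ (Set.Ioi (a + m*δ))).toReal)) := by
      have := (hF (a + m*δ))
      have h2 : Tendsto (fun n => 1 - ((ν n) (Set.Iic (a + m*δ))).toReal) atTop
          (𝓝 (1 - (γ (Set.Iic (a + m*δ))).toReal)) := tendsto_const_nhds.sub this
      rw [prob_Ioi_toReal]
      refine h2.congr fun n => (prob_Ioi_toReal _).symm
    exact h1.eventually_lt_const (by linarith [hγtail])
  have hev3 : ∀ᶠ n in atTop, dist (S n) Sγ < ε' := Metric.tendsto_nhds.mp hcv ε' hε'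
  rw [← Filter.eventually_atTop]
  filter_upwards [hev1, hev2, hev3] with n h1 h2 h3
  have hchn := hch n
  have : dist (∫ x, f n x ∂(ν n)) (∫ x, g x ∂γ)
      ≤ ‖(∫ x, f n x ∂(ν n)) - S n‖ + dist (S n) Sγ + ‖(∫ x, g x ∂γ) - Sγ‖ := by
    rw [dist_eq_norm, dist_eq_norm]
    have : (∫ x, f n x ∂(ν n)) - (∫ x, g x ∂γ)
        = ((∫ x, f n x ∂(ν n)) - S n) + (S n - Sγ) - ((∫ x, g x ∂γ) - Sγ) := by ring
    rw [this]
    refine (norm_sub_le _ _).trans ?_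
    gcongr
    exact norm_add_le _ _
  have : dist (∫ x, f n x ∂(ν n)) (∫ x, g x ∂γ) ≤ 9 * ε' := by linarith
  calc dist (∫ x, f n x ∂(ν n)) (∫ x, g x ∂γ) ≤ 9 * ε' := this
    _ < ε := by rw [hε'def]; linarith
open MeasureTheory Filter Set
open scoped Topology

lemma norm_exp_I_mul (r : ℝ) : ‖Complex.exp (Complex.I * r)‖ = 1 := by
  rw [Complex.norm_exp]
  simp [Complex.mul_re]

lemma norm_exp_I_mul_sub_one (θ : ℝ) : ‖Complex.exp (Complex.I * θ) - 1‖ ≤ |θ| := by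
  have h1 : Complex.exp (Complex.I * θ) - 1
      = Complex.exp (Complex.I * (θ/2 : ℝ)) * (2 * Complex.I * Complex.sin ((θ/2 : ℝ) : ℂ)) := by
    rw [mul_comm Complex.I ((θ:ℝ):ℂ), mul_comm Complex.I ((θ/2:ℝ):ℂ),
      Complex.exp_mul_I, Complex.exp_mul_I]
    have hθ : ((θ:ℝ):ℂ) = 2 * ((θ/2 : ℝ) : ℂ) := by push_cast; ring
    rw [hθ, Complex.sin_two_mul, Complex.cos_two_mul]
    have hpyth := Complex.sin_sq_add_cos_sq (((θ/2 : ℝ)) : ℂ)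
    linear_combination (2:ℂ) * hpyth - 2 * Complex.sin (((θ/2 : ℝ)) : ℂ) ^ 2 * Complex.I_sq
  rw [h1, norm_mul, norm_exp_I_mul, one_mul, ← Complex.ofReal_sin]
  have h2 : ‖(2:ℂ) * Complex.I * ((Real.sin (θ/2) : ℝ) : ℂ)‖ = 2 * |Real.sin (θ/2)| := by
    rw [norm_mul, norm_mul, Complex.norm_real, Complex.norm_I, Real.norm_eq_abs]
    simp
  rw [h2]
  have h3 : |Real.sin (θ/2)| ≤ |θ/2| := Real.abs_sin_le_abs
  rw [abs_div] at h3
  simp only [abs_two] at h3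
  linarith [abs_nonneg θ]

lemma norm_exp_I_mul_sub_exp_I_mul (u x y : ℝ) :
    ‖Complex.exp (Complex.I * u * x) - Complex.exp (Complex.I * u * y)‖ ≤ |u| * |x - y| := by
  have h1 : Complex.I * u * x = Complex.I * (u*y : ℝ) + Complex.I * (u*(x-y) : ℝ) := by
    push_cast; ring
  have h2 : Complex.I * u * y = Complex.I * (u*y : ℝ) := by push_cast; ring
  rw [h1, h2, Complex.exp_add, ← mul_one (Complex.exp (Complex.I * ((u*y : ℝ) : ℂ))), mul_assoc,
    ← mul_sub, norm_mul, one_mul, norm_exp_I_mul, one_mul]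
  calc ‖Complex.exp (Complex.I * ((u*(x-y) : ℝ) : ℂ)) - 1‖ ≤ |u*(x-y)| :=
        norm_exp_I_mul_sub_one _
    _ = |u| * |x - y| := abs_mul _ _

end AuxLemmas

/-- Lemma 6 (in the general form established by its proof): if `(Xₙ − nℓ)/(σ√n)` converges in
distribution to the standard normal and `(b_k)` is a summable sequence of nonnegative reals,
then for every `t ∈ ℝ`,
`∑_{k=0}^{n−1} b_k · | |E[e^{i(t/(σ√n))X_{n−k}}]|² − |E[e^{i(t/(σ√n))Xₙ}]|² | → 0`. -/
theorem weighted_sums_of_squared_charFun_differences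
    {Ω : Type*} [MeasurableSpace Ω] (P : Measure Ω) [IsProbabilityMeasure P]
    (X : ℕ → Ω → ℝ) (hX : ∀ n, Measurable (X n))
    (ℓ : ℝ) (σ : ℝ) (hσ : 0 < σ)
    -- convergence in distribution to `N(0,1)` (the limit CDF is continuous everywhere, so
    -- this is pointwise convergence of distribution functions)
    (hclt : ∀ x : ℝ, Tendsto
      (fun n : ℕ => (P {ω | (X n ω - n * ℓ) / (σ * Real.sqrt n) ≤ x}).toReal)
      atTop (𝓝 (stdGaussCDF x)))
    (b : ℕ → ℝ) (hb0 : ∀ k, 0 ≤ b k) (hb : Summable b) :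
    ∀ t : ℝ, Tendsto
      (fun n : ℕ => ∑ k ∈ Finset.range n, b k *
        |‖∫ ω, Complex.exp (Complex.I * ((t / (σ * Real.sqrt n) : ℝ) : ℂ) *
            ((X (n - k) ω : ℝ) : ℂ)) ∂P‖ ^ 2 -
         ‖∫ ω, Complex.exp (Complex.I * ((t / (σ * Real.sqrt n) : ℝ) : ℂ) *
            ((X n ω : ℝ) : ℂ)) ∂P‖ ^ 2|)
      atTop (𝓝 0) := by
  intro t
  have hZm : ∀ n : ℕ, Measurable (fun ω => (X n ω - n * ℓ) / (σ * Real.sqrt n)) :=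
    fun n => ((hX n).sub measurable_const).div_const _
  set Z : ℕ → Ω → ℝ := fun n ω => (X n ω - n * ℓ) / (σ * Real.sqrt n) with hZdef
  set μ : ℕ → Measure ℝ := fun n => P.map (Z n) with hμdef
  haveI hinst : ∀ n, IsProbabilityMeasure (μ n) :=
    fun n => Measure.isProbabilityMeasure_map (hZm n).aemeasurable
  have hF0 : ∀ x : ℝ, Tendsto (fun n => (μ n (Set.Iic x)).toReal) atTop
      (𝓝 ((gaussianReal 0 1 (Set.Iic x)).toReal)) := by
    intro x
    have heq : ∀ n, (μ n (Set.Iic x)).toReal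
        = (P {ω | (X n ω - n * ℓ) / (σ * Real.sqrt n) ≤ x}).toReal := by
      intro n
      rw [hμdef]
      rw [Measure.map_apply (hZm n) measurableSet_Iic]
      rfl
    exact ((hclt x).congr fun n => (heq n).symm)
  set A : ℕ → ℕ → ℂ := fun n k => ∫ ω, Complex.exp (Complex.I * ((t / (σ * Real.sqrt n) : ℝ) : ℂ) *
      ((X (n - k) ω : ℝ) : ℂ)) ∂P with hA
  set C : ℂ := ∫ x : ℝ, Complex.exp (Complex.I * ((t : ℝ) : ℂ) * ((x : ℝ) : ℂ))
      ∂(gaussianReal 0 1) with hC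
  have hAnorm : ∀ n k, ‖A n k‖ ≤ 1 := by
    intro n k
    rw [hA]
    refine (norm_integral_le_integral_norm _).trans ?_
    have heq1 : ∀ ω : Ω, ‖Complex.exp (Complex.I * ((t / (σ * Real.sqrt n) : ℝ) : ℂ) *
        ((X (n - k) ω : ℝ) : ℂ))‖ = 1 := by
      intro ω
      rw [show Complex.I * ((t / (σ * Real.sqrt n) : ℝ) : ℂ) * ((X (n - k) ω : ℝ) : ℂ)
          = Complex.I * ((t / (σ * Real.sqrt n) * X (n - k) ω : ℝ) : ℂ) by push_cast; ring]
      exact norm_exp_I_mul _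
    calc (∫ ω, ‖Complex.exp (Complex.I * ((t / (σ * Real.sqrt n) : ℝ) : ℂ) *
        ((X (n - k) ω : ℝ) : ℂ))‖ ∂P) = ∫ _, (1:ℝ) ∂P :=
          integral_congr_ae (Filter.Eventually.of_forall heq1)
      _ ≤ 1 := by simp
  -- the key per-k convergence
  have hkey : ∀ k : ℕ, Tendsto (fun n => ‖A n k‖) atTop (𝓝 ‖C‖) := by
    intro k
    set u : ℕ → ℝ := fun n => t * (Real.sqrt ((n - k : ℕ) : ℝ) / Real.sqrt (n : ℝ)) with hu
    have hut : Tendsto u atTop (𝓝 t) := by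
      have hratio : Tendsto (fun n : ℕ => (((n - k : ℕ) : ℝ)) / (n : ℝ)) atTop (𝓝 1) := by
        have h1 : Tendsto (fun n : ℕ => 1 - (k : ℝ) / (n : ℝ)) atTop (𝓝 1) := by
          have h2 := tendsto_const_div_atTop_nhds_zero_nat (k : ℝ)
          have h3 := (tendsto_const_nhds (x := (1:ℝ)) (f := atTop (α := ℕ))).sub h2
          simpa using h3
        refine h1.congr' ?_
        filter_upwards [eventually_ge_atTop (k+1)] with n hn
        have hk : k ≤ n := by omega
        have hn0 : (0:ℝ) < n := by
          have : 0 < n := by omega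
          exact_mod_cast this
        rw [Nat.cast_sub hk]
        field_simp
      have hsq : Tendsto (fun n : ℕ => Real.sqrt ((((n - k : ℕ) : ℝ)) / (n : ℝ))) atTop
          (𝓝 1) := by
        have h5 := (Real.continuous_sqrt.tendsto 1).comp hratio
        rw [Real.sqrt_one] at h5
        exact h5
      have hsq' : Tendsto (fun n : ℕ => Real.sqrt ((n - k : ℕ) : ℝ) / Real.sqrt (n : ℝ)) atTop
          (𝓝 1) := by
        refine hsq.congr fun n => ?_
        exact Real.sqrt_div (by positivity) _
      have := (tendsto_const_nhds (x := t) (f := atTop (α := ℕ))).mul hsq'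
      simpa using this
    have huB : ∀ n, |u n| ≤ |t| + 1 := by
      intro n
      rw [hu]
      have hr0 : 0 ≤ Real.sqrt ((n - k : ℕ) : ℝ) / Real.sqrt (n : ℝ) := by positivity
      have hr1 : Real.sqrt ((n - k : ℕ) : ℝ) / Real.sqrt (n : ℝ) ≤ 1 := by
        apply div_le_one_of_le₀
        · exact Real.sqrt_le_sqrt (by exact_mod_cast Nat.sub_le n k)
        · positivity
      rw [abs_mul, abs_of_nonneg hr0]
      nlinarith [abs_nonneg t]
    -- convergence of the transformed integrals
    have hBtend : Tendsto (fun n => ∫ x : ℝ, Complex.exp (Complex.I * ((u n : ℝ) : ℂ) *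
        ((x : ℝ) : ℂ)) ∂(μ (n - k))) atTop (𝓝 C) := by
      rw [hC]
      refine helly_bray (L := |t| + 1) ?_ (by positivity) ?_ ?_ ?_ ?_ ?_ ?_ ?_
      · intro x
        exact (hF0 x).comp (tendsto_sub_atTop_nat k)
      · intro n
        exact Complex.measurable_exp.comp (Complex.measurable_ofReal.const_mul _)
      · exact Complex.measurable_exp.comp (Complex.measurable_ofReal.const_mul _)
      · intro n x
        rw [show Complex.I * ((u n : ℝ) : ℂ) * ((x : ℝ) : ℂ)
            = Complex.I * ((u n * x : ℝ) : ℂ) by push_cast; ring]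
        exact le_of_eq (norm_exp_I_mul _)
      · intro x
        rw [show Complex.I * ((t : ℝ) : ℂ) * ((x : ℝ) : ℂ)
            = Complex.I * ((t * x : ℝ) : ℂ) by push_cast; ring]
        exact le_of_eq (norm_exp_I_mul _)
      · intro n x y
        refine (norm_exp_I_mul_sub_exp_I_mul (u n) x y).trans ?_
        exact mul_le_mul_of_nonneg_right (huB n) (abs_nonneg _)
      · intro x y
        refine (norm_exp_I_mul_sub_exp_I_mul t x y).trans ?_
        exact mul_le_mul_of_nonneg_right (by linarith [abs_nonneg t]) (abs_nonneg _)
      · intro x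
        have hcont : Continuous fun s : ℝ => Complex.exp (Complex.I * ((s : ℝ) : ℂ) *
            ((x : ℝ) : ℂ)) := by
          exact Complex.continuous_exp.comp
            ((continuous_const.mul Complex.continuous_ofReal).mul continuous_const)
        exact (hcont.tendsto t).comp hut
    -- eventual equality of norms
    have hnormeq : ∀ᶠ n in atTop, ‖(∫ x : ℝ, Complex.exp (Complex.I * ((u n : ℝ) : ℂ) *
        ((x : ℝ) : ℂ)) ∂(μ (n - k)))‖ = ‖A n k‖ := by
      filter_upwards [eventually_ge_atTop (k+1)] with n hn
      have hkn : k ≤ n := by omega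
      have hn1 : 1 ≤ n - k := by omega
      have hnpos : (0:ℝ) < (n : ℝ) := by
        have : 0 < n := by omega
        exact_mod_cast this
      have hmpos : (0:ℝ) < ((n - k : ℕ) : ℝ) := by exact_mod_cast hn1
      have hsn : (0:ℝ) < Real.sqrt (n : ℝ) := Real.sqrt_pos.2 hnpos
      have hsm : (0:ℝ) < Real.sqrt ((n - k : ℕ) : ℝ) := Real.sqrt_pos.2 hmpos
      -- map the integral back to Ω
      have hmap : (∫ x : ℝ, Complex.exp (Complex.I * ((u n : ℝ) : ℂ) * ((x : ℝ) : ℂ))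
          ∂(μ (n - k)))
          = ∫ ω, Complex.exp (Complex.I * ((u n : ℝ) : ℂ) * ((Z (n - k) ω : ℝ) : ℂ)) ∂P := by
        rw [hμdef]
        exact integral_map (hZm (n - k)).aemeasurable
          ((Complex.measurable_exp.comp
            (Complex.measurable_ofReal.const_mul _)).aestronglyMeasurable)
      -- pointwise factorization
      have hptwise : ∀ ω : Ω, Complex.exp (Complex.I * ((t / (σ * Real.sqrt n) : ℝ) : ℂ) *
          ((X (n - k) ω : ℝ) : ℂ))
          = Complex.exp (Complex.I * ((t / (σ * Real.sqrt n) * (((n - k : ℕ) : ℝ) * ℓ) : ℝ) : ℂ))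
            * Complex.exp (Complex.I * ((u n : ℝ) : ℂ) * ((Z (n - k) ω : ℝ) : ℂ)) := by
        intro ω
        rw [← Complex.exp_add]
        congr 1
        have hre : t / (σ * Real.sqrt n) * X (n - k) ω
            = t / (σ * Real.sqrt n) * (((n - k : ℕ) : ℝ) * ℓ) + u n * Z (n - k) ω := by
          have h1 : Real.sqrt ((n - k : ℕ) : ℝ) ≠ 0 := hsm.ne'
          have h1' : Real.sqrt ((n : ℝ) - (k : ℝ)) ≠ 0 := by
            rw [show (n : ℝ) - (k : ℝ) = ((n - k : ℕ) : ℝ) by rw [Nat.cast_sub hkn]]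
            exact hsm.ne'
          have h2 : Real.sqrt (n : ℝ) ≠ 0 := hsn.ne'
          have h3 : σ ≠ 0 := hσ.ne'
          rw [hu, hZdef]
          field_simp
          ring
        have hreC : ((t / (σ * Real.sqrt n) * X (n - k) ω : ℝ) : ℂ)
            = ((t / (σ * Real.sqrt n) * (((n - k : ℕ) : ℝ) * ℓ) : ℝ) : ℂ)
              + ((u n * Z (n - k) ω : ℝ) : ℂ) := by
          exact_mod_cast congrArg (fun r : ℝ => ((r : ℝ) : ℂ)) hre
        push_cast at hreC ⊢
        linear_combination Complex.I * hreC
      rw [hmap, hA]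
      simp only [hptwise]
      rw [integral_const_mul, norm_mul, norm_exp_I_mul, one_mul]
    exact (hBtend.norm.congr' hnormeq)
  -- assemble the sum
  set D : ℕ → ℕ → ℝ := fun n k => b k * |‖A n k‖ ^ 2 - ‖A n 0‖ ^ 2| with hD
  have hDt : ∀ k, Tendsto (fun n => D n k) atTop (𝓝 0) := by
    intro k
    have h1 : Tendsto (fun n => ‖A n k‖ ^ 2 - ‖A n 0‖ ^ 2) atTop (𝓝 (‖C‖ ^ 2 - ‖C‖ ^ 2)) :=
      (((hkey k).pow 2).sub ((hkey 0).pow 2))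
    rw [sub_self] at h1
    have h2 := h1.abs
    rw [abs_zero] at h2
    have h3 := h2.const_mul (b k)
    simpa using h3
  have hDb : ∀ n k, ‖D n k‖ ≤ 2 * b k := by
    intro n k
    rw [Real.norm_eq_abs, hD, abs_mul, abs_of_nonneg (hb0 k), abs_abs]
    have h1 : |‖A n k‖ ^ 2 - ‖A n 0‖ ^ 2| ≤ 2 := by
      rw [abs_le]
      constructor
      · nlinarith [hAnorm n k, hAnorm n 0, norm_nonneg (A n k), norm_nonneg (A n 0)]
      · nlinarith [hAnorm n k, hAnorm n 0, norm_nonneg (A n k), norm_nonneg (A n 0)]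
    nlinarith [hb0 k, abs_nonneg (‖A n k‖ ^ 2 - ‖A n 0‖ ^ 2)]
  have hq : Tendsto (fun n => ∑' k : ℕ, (if k < n then D n k else 0)) atTop
      (𝓝 (∑' _ : ℕ, (0:ℝ))) := by
    refine tendsto_tsum_of_dominated_convergence (bound := fun k => 2 * b k)
      (hb.mul_left 2) ?_ ?_
    · intro k
      refine ((hDt k).congr' ?_)
      filter_upwards [eventually_gt_atTop k] with n hn
      simp [hn]
    · refine Filter.Eventually.of_forall fun n k => ?_
      by_cases hkn : k < n
      · simpa [hkn] using hDb n k
      · simp only [if_neg hkn, norm_zero]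
        linarith [hb0 k]
  rw [tsum_zero] at hq
  have hfin : (fun n => ∑' k : ℕ, (if k < n then D n k else 0))
      = fun n => ∑ k ∈ Finset.range n, D n k := by
    funext n
    rw [tsum_eq_sum (s := Finset.range n) (fun k hk => by
      simp [Finset.mem_range] at hk
      simp [hk])]
    exact Finset.sum_congr rfl fun k hk => by simp [Finset.mem_range.1 hk]
  rw [hfin] at hq
  exact hq
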